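/- Assume ρ(β^j) ≠ 0 for every j ∈ Z/(q^m−1)Z. Let r ∈ F^L, let (S_0,…,S_{t−1}) = rH^T, and set S(x) = Σ_{i=0}^{t−1} S_i x^i ∈ F[x]. For each l ∈ L, let p_l(x) ∈ F[x] be the common minimal polynomial over F of the elements β^{−j} for j ∈ l. Suppose e ∈ F^L satisfies 2·deg e ≤ t and r − e ∈ C(ρ,t), and suppose (λ, ω) ∈ F[x]² satisfies λ(0) = 1, gcd(λ, ω) = 1, deg ω < deg λ, 2·deg λ ≤ t, and λ(x)S(x) ≡ ω(x) (mod x^t). Then {l ∈ L : p_l(x) divides λ(x)} = {l ∈ L : e_l ≠ 0}, and in the field of rational functions E(x) one has ω(x)/λ(x) = Σ_{l : e_l ≠ 0} e_l · Σ_{j∈l} ρ(β^j)/(1 − β^j x). -/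

import Mathlib

open Polynomial

noncomputable section

/-- The orbit of `j : ZMod N` under multiplication by `q`. -/
def qOrbit (N q : ℕ) (j : ZMod N) : Set (ZMod N) :=
  Set.range fun k : ℕ => (q : ZMod N) ^ k * j

/-- The set `L` of orbits of `ZMod N` under multiplication by `q`. -/
def orbitSet (N q : ℕ) : Set (Set (ZMod N)) :=
  {l | ∃ j : ZMod N, l = qOrbit N q j}

/-- `β ^ j` for a residue class `j`. -/
def bpow {E : Type*} [Monoid E] {N : ℕ} (β : E) (j : ZMod N) : E :=
  β ^ j.val

/-- The check-matrix entry `h_{i l} = ∑_{j ∈ l} ρ(β^j) β^{i j}`, as an element of `E`. -/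
def hEntry {F E : Type*} [CommSemiring F] [CommSemiring E] [Algebra F E] {N : ℕ}
    (β : E) (ρ : Polynomial F) (i : ℕ) (l : Set (ZMod N)) : E :=
  ∑ᶠ j ∈ l, Polynomial.aeval (bpow β j) ρ * bpow β j ^ i

/-- The code `C(ρ, t)` inside `F^L`. -/
def codeSet (F E : Type*) [Field F] [Field E] [Algebra F E] (N q : ℕ)
    (β : E) (ρ : Polynomial F) (t : ℕ) : Set (↥(orbitSet N q) → F) :=
  {c | ∀ i < t, ∑ᶠ l : orbitSet N q,
    algebraMap F E (c l) * hEntry β ρ i (l : Set (ZMod N)) = 0}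

open scoped Classical in
/-- `deg c = ∑_{l : c_l ≠ 0} |l|`. -/
def wdeg {F : Type*} [Zero F] {N q : ℕ} (c : ↥(orbitSet N q) → F) : ℕ :=
  ∑ᶠ l : orbitSet N q, if c l ≠ 0 then (l : Set (ZMod N)).ncard else 0

section Orbits
variable {N q m : ℕ}

lemma mem_qOrbit_self (N q : ℕ) (j : ZMod N) : j ∈ qOrbit N q j :=
  ⟨0, by simp⟩

lemma qOrbit_eq_of_mem (hm : 0 < m) (hq : (q : ZMod N) ^ m = 1) {j j' : ZMod N}
    (h : j' ∈ qOrbit N q j) : qOrbit N q j' = qOrbit N q j := by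
  obtain ⟨k, rfl⟩ := h
  ext x
  simp only [qOrbit, Set.mem_range]
  constructor
  · rintro ⟨i, rfl⟩
    exact ⟨i + k, by rw [pow_add]; ring⟩
  · rintro ⟨i, rfl⟩
    refine ⟨i + k * (m - 1), ?_⟩
    have hkm : i + k * (m - 1) + k = i + m * k := by
      have : m - 1 + 1 = m := Nat.sub_add_cancel hm
      calc i + k * (m - 1) + k = i + k * (m - 1 + 1) := by ring
        _ = i + m * k := by rw [this]; ring
    show (q : ZMod N) ^ (i + k * (m-1)) * ((q:ZMod N) ^ k * j) = (q : ZMod N) ^ i * j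
    rw [← mul_assoc, ← pow_add, hkm, pow_add, pow_mul, hq, one_pow, mul_one]

lemma mem_orbit_iff (hm : 0 < m) (hq : (q : ZMod N) ^ m = 1) {l : Set (ZMod N)}
    (hl : l ∈ orbitSet N q) {j : ZMod N} : j ∈ l ↔ qOrbit N q j = l := by
  obtain ⟨j₀, rfl⟩ := hl
  constructor
  · exact qOrbit_eq_of_mem hm hq
  · intro h; exact h ▸ mem_qOrbit_self N q j

/-- The orbit of `j` as an element of the subtype. -/
def orbOf (N q : ℕ) (j : ZMod N) : ↥(orbitSet N q) := ⟨qOrbit N q j, j, rfl⟩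

lemma mem_orbit_iff' (hm : 0 < m) (hq : (q : ZMod N) ^ m = 1) (l : ↥(orbitSet N q))
    (j : ZMod N) : j ∈ (l : Set (ZMod N)) ↔ orbOf N q j = l := by
  rw [mem_orbit_iff hm hq l.2]
  constructor
  · intro h; exact Subtype.ext h
  · intro h; exact congrArg Subtype.val h

instance [NeZero N] : Finite ↥(orbitSet N q) := by
  have : Finite (Set (ZMod N)) := by infer_instance
  exact Subtype.finite

instance [NeZero N] : Fintype ↥(orbitSet N q) := Fintype.ofFinite _

open Classical in
lemma sum_orbit {M : Type*} [AddCommMonoid M] [NeZero N] (hm : 0 < m)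
    (hq : (q : ZMod N) ^ m = 1) (g : ZMod N → M) :
    ∑ l : ↥(orbitSet N q), ∑ j ∈ (Set.toFinite (l : Set (ZMod N))).toFinset, g j
      = ∑ j : ZMod N, g j := by
  rw [← Finset.sum_fiberwise_of_maps_to (g := orbOf N q) (t := Finset.univ)
    (fun i _ => Finset.mem_univ _) g]
  refine Finset.sum_congr rfl fun l _ => Finset.sum_congr ?_ fun _ _ => rfl
  ext j
  simp only [Set.Finite.mem_toFinset, Finset.mem_filter, Finset.mem_univ, true_and]
  rw [mem_orbit_iff' hm hq l j]

end Orbits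

section Key
variable {E : Type*} [Field E] {ι : Type*} [DecidableEq ι]

lemma key_unique (J : Finset ι) (b : ι → E) (hb0 : ∀ j ∈ J, b j ≠ 0)
    (hbinj : Set.InjOn b J) (c : ι → E) (hc : ∀ j ∈ J, c j ≠ 0) (t : ℕ)
    (S' : E[X]) (hS'deg : S'.degree < t)
    (hS'coeff : ∀ i < t, S'.coeff i = ∑ j ∈ J, c j * b j ^ i)
    (hJ : 2 * J.card ≤ t) (lam' om' : E[X]) (hl0 : lam'.coeff 0 = 1)
    (hcop : IsCoprime lam' om') (hdeg : om'.degree < lam'.degree)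
    (hlt : 2 * lam'.natDegree ≤ t) (hkey : (X : E[X]) ^ t ∣ lam' * S' - om') :
    lam' = ∏ j ∈ J, (1 - C (b j) * X) ∧
      om' = ∑ j ∈ J, C (c j) * ∏ j' ∈ J.erase j, (1 - C (b j') * X) := by
  set f : ι → E[X] := fun j => 1 - C (b j) * X with hf
  set Λ : E[X] := ∏ j ∈ J, f j with hΛ
  set Ω : E[X] := ∑ j ∈ J, C (c j) * ∏ j' ∈ J.erase j, f j' with hΩ
  have hlam'ne : lam' ≠ 0 := fun h => by simp [h] at hl0
  -- degrees of the linear factors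
  have hfdeg : ∀ j ∈ J, (f j).degree = 1 := by
    intro j hj
    have : f j = C (-(b j)) * X + C 1 := by simp [hf]; ring
    rw [this, degree_linear (neg_ne_zero.mpr (hb0 j hj))]
  have hfne : ∀ j ∈ J, f j ≠ 0 := fun j hj h => by
    simpa [h] using hfdeg j hj
  have hΛne : Λ ≠ 0 := Finset.prod_ne_zero_iff.mpr hfne
  have hΛdeg : Λ.degree = J.card := by
    rw [hΛ, degree_prod]
    rw [Finset.sum_congr rfl hfdeg]
    simp
  have hΛ0 : Λ.coeff 0 = 1 := by
    rw [coeff_zero_eq_eval_zero, hΛ, eval_prod]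
    simp [hf]
  -- degree of Ω
  have hΩdeg : Ω.degree < (J.card : WithBot ℕ) := by
    rw [hΩ]
    apply lt_of_le_of_lt (degree_sum_le _ _)
    rw [Finset.sup_lt_iff (by exact_mod_cast WithBot.bot_lt_coe _)]
    intro j hj
    apply lt_of_le_of_lt (degree_mul_le _ _)
    have h1 : (C (c j)).degree ≤ 0 := degree_C_le
    have h2 : (∏ j' ∈ J.erase j, f j').degree = (J.erase j).card := by
      rw [degree_prod, Finset.sum_congr rfl (fun j' hj' => hfdeg j' (Finset.mem_of_mem_erase hj'))]
      simp
    calc (C (c j)).degree + (∏ j' ∈ J.erase j, f j').degree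
        ≤ 0 + (J.erase j).card := by exact add_le_add h1 (le_of_eq h2)
      _ = ((J.erase j).card : WithBot ℕ) := by rw [zero_add]
      _ < (J.card : WithBot ℕ) := by
          exact_mod_cast Finset.card_erase_lt_of_mem hj
  -- geometric series representation of S'
  set G : ι → E[X] := fun j => ∑ i ∈ Finset.range t, (C (b j) * X) ^ i with hG
  have hfG : ∀ j, f j * G j = 1 - (C (b j) * X) ^ t := by
    intro j
    have := geom_sum_mul (C (b j) * X) t
    rw [hf, hG]
    linear_combination -this
  have hS'repr : S' = ∑ j ∈ J, C (c j) * G j := by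
    ext n
    rw [finset_sum_coeff]
    have hterm : ∀ j, (C (c j) * G j).coeff n
        = if n < t then c j * b j ^ n else 0 := by
      intro j
      rw [coeff_C_mul, hG, finset_sum_coeff]
      have : ∀ i, ((C (b j) * X) ^ i).coeff n = if n = i then b j ^ n else 0 := by
        intro i
        rw [mul_pow, ← C_pow, coeff_C_mul, coeff_X_pow]
        by_cases h : n = i
        · subst h; simp
        · simp [h]
      rw [Finset.sum_congr rfl (fun i _ => this i), Finset.sum_ite_eq (Finset.range t)]
      by_cases h : n < t <;> simp [h, Finset.mem_range]
    rw [Finset.sum_congr rfl (fun j _ => hterm j)]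
    by_cases h : n < t
    · simp only [if_pos h]
      exact hS'coeff n h
    · simp only [if_neg h]
      rw [Finset.sum_const_zero]
      exact coeff_eq_zero_of_degree_lt (lt_of_lt_of_le hS'deg (by
        exact_mod_cast Nat.cast_le.mpr (not_lt.mp h)))
  -- the key congruence for (Λ, Ω)
  have hdvd2 : (X : E[X]) ^ t ∣ Λ * S' - Ω := by
    have hrepr : Λ * S' - Ω
        = ∑ j ∈ J, C (c j) * (-((C (b j) * X) ^ t) * ∏ j' ∈ J.erase j, f j') := by
      rw [hS'repr, hΩ, Finset.mul_sum, ← Finset.sum_sub_distrib]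
      refine Finset.sum_congr rfl fun j hj => ?_
      have hΛj : Λ = f j * ∏ j' ∈ J.erase j, f j' := (Finset.mul_prod_erase J f hj).symm
      calc Λ * (C (c j) * G j) - C (c j) * ∏ j' ∈ J.erase j, f j'
          = C (c j) * ((f j * G j) * ∏ j' ∈ J.erase j, f j'
              - ∏ j' ∈ J.erase j, f j') := by rw [hΛj]; ring
        _ = C (c j) * (-((C (b j) * X) ^ t) * ∏ j' ∈ J.erase j, f j') := by
            rw [hfG j]; ring
    rw [hrepr]
    refine Finset.dvd_sum fun j hj => ?_
    have : (X : E[X]) ^ t ∣ (C (b j) * X) ^ t := ⟨C (b j) ^ t, by rw [mul_pow]; ring⟩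
    exact Dvd.dvd.mul_left (Dvd.dvd.mul_right (dvd_neg.mpr this) _) _
  -- cross multiply
  have hcross : lam' * Ω = Λ * om' := by
    have h1 : (X : E[X]) ^ t ∣ Λ * (lam' * S' - om') - lam' * (Λ * S' - Ω) :=
      dvd_sub (Dvd.dvd.mul_left hkey Λ) (Dvd.dvd.mul_left hdvd2 lam')
    have h2 : Λ * (lam' * S' - om') - lam' * (Λ * S' - Ω) = lam' * Ω - Λ * om' := by ring
    rw [h2] at h1
    by_contra hne
    have hne' : lam' * Ω - Λ * om' ≠ 0 := sub_ne_zero.mpr hne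
    have hdle : (X : E[X]) ^ t ∣ lam' * Ω - Λ * om' := h1
    have := Polynomial.degree_le_of_dvd hdle hne'
    rw [degree_X_pow] at this
    -- degree bound
    have hb1 : (lam' * Ω).degree < (t : WithBot ℕ) := by
      rw [degree_mul]
      calc lam'.degree + Ω.degree < lam'.degree + (J.card : WithBot ℕ) := by
            apply WithBot.add_lt_add_left _ hΩdeg
            rw [degree_eq_natDegree hlam'ne]; exact WithBot.coe_ne_bot
        _ = ((lam'.natDegree + J.card : ℕ) : WithBot ℕ) := by
            rw [degree_eq_natDegree hlam'ne]; exact_mod_cast rfl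
        _ ≤ (t : WithBot ℕ) := by exact_mod_cast (by omega : lam'.natDegree + J.card ≤ t)
    have hb2 : (Λ * om').degree < (t : WithBot ℕ) := by
      rw [degree_mul, hΛdeg]
      calc (J.card : WithBot ℕ) + om'.degree < (J.card : WithBot ℕ) + lam'.degree := by
            apply WithBot.add_lt_add_left _ hdeg
            exact WithBot.coe_ne_bot
        _ = ((J.card + lam'.natDegree : ℕ) : WithBot ℕ) := by
            rw [degree_eq_natDegree hlam'ne]; exact_mod_cast rfl
        _ ≤ (t : WithBot ℕ) := by exact_mod_cast (by omega : J.card + lam'.natDegree ≤ t)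
    have : (t : WithBot ℕ) ≤ (lam' * Ω - Λ * om').degree := this
    have hlt' : (lam' * Ω - Λ * om').degree < (t : WithBot ℕ) :=
      lt_of_le_of_lt (degree_sub_le _ _) (max_lt hb1 hb2)
    exact absurd (lt_of_le_of_lt this hlt') (lt_irrefl _)
  -- lam' divides Λ
  have hdvdΛ : lam' ∣ Λ := by
    have : lam' ∣ Λ * om' := hcross ▸ Dvd.intro _ rfl
    exact hcop.dvd_of_dvd_mul_right this
  -- Λ divides lam'
  have hΩeval : ∀ j ∈ J, Ω.eval (b j)⁻¹ ≠ 0 := by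
    intro j hj
    have hval : Ω.eval (b j)⁻¹
        = c j * ∏ j' ∈ J.erase j, (1 - b j' * (b j)⁻¹) := by
      rw [hΩ, eval_finset_sum]
      rw [Finset.sum_eq_single j]
      · rw [eval_mul, eval_C, eval_prod]
        congr 1
        refine Finset.prod_congr rfl fun j' _ => by simp [hf]
      · intro j' hj' hne
        rw [eval_mul, eval_prod]
        have hjmem : j ∈ J.erase j' := Finset.mem_erase.mpr ⟨fun h => hne h.symm, hj⟩
        rw [Finset.prod_eq_zero hjmem (by simp [hf, mul_inv_cancel₀ (hb0 j hj)])]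
        ring
      · intro h; exact absurd hj h
    rw [hval]
    apply mul_ne_zero (hc j hj)
    apply Finset.prod_ne_zero_iff.mpr
    intro j' hj'
    obtain ⟨hne, hj'J⟩ := Finset.mem_erase.mp hj'
    intro h
    have h1 : b j' = b j :=
      (mul_inv_eq_one₀ (hb0 j hj)).mp (sub_eq_zero.mp h).symm
    exact hne (hbinj hj'J hj h1)
  have hlamroot : ∀ j ∈ J, lam'.eval (b j)⁻¹ = 0 := by
    intro j hj
    have h0 : Λ.eval (b j)⁻¹ = 0 := by
      rw [hΛ, eval_prod]
      exact Finset.prod_eq_zero hj (by simp [hf, mul_inv_cancel₀ (hb0 j hj)])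
    have := congrArg (Polynomial.eval (b j)⁻¹) hcross
    rw [eval_mul, eval_mul, h0, zero_mul] at this
    exact (mul_eq_zero.mp this).resolve_right (hΩeval j hj)
  have hbinvinj : Set.InjOn (fun j => (b j)⁻¹) J := by
    intro x hx y hy h
    exact hbinj hx hy (by
      have := congrArg (·⁻¹) h
      simpa [inv_inv] using this)
  have hPdvd : (∏ j ∈ J, (X - C (b j)⁻¹)) ∣ lam' := by
    apply Finset.prod_dvd_of_coprime
    · intro x hx y hy hne
      exact isCoprime_X_sub_C_of_isUnit_sub
        (IsUnit.mk0 _ (sub_ne_zero.mpr fun h => hne (hbinvinj hx hy h)))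
    · intro j hj
      exact dvd_iff_isRoot.mpr (hlamroot j hj)
  have hΛfactor : Λ = C (∏ j ∈ J, (-(b j))) * ∏ j ∈ J, (X - C (b j)⁻¹) := by
    rw [hΛ, map_prod, ← Finset.prod_mul_distrib]
    refine Finset.prod_congr rfl fun j hj => ?_
    have hbj := hb0 j hj
    have hC : C (b j) * C (b j)⁻¹ = 1 := by rw [← C_mul, mul_inv_cancel₀ hbj, C_1]
    show (1 : E[X]) - C (b j) * X = C (-(b j)) * (X - C (b j)⁻¹)
    calc (1 : E[X]) - C (b j) * X = C (b j) * C (b j)⁻¹ - C (b j) * X := by rw [hC]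
      _ = C (-(b j)) * (X - C (b j)⁻¹) := by rw [map_neg]; ring
  have hΛdvd : Λ ∣ lam' := by
    rw [hΛfactor]
    have hu : IsUnit (C (∏ j ∈ J, (-(b j)))) := by
      apply Polynomial.isUnit_C.mpr
      exact IsUnit.mk0 _ (Finset.prod_ne_zero_iff.mpr fun j hj => neg_ne_zero.mpr (hb0 j hj))
    exact hu.mul_left_dvd.mpr hPdvd
  obtain ⟨d, hd⟩ := hΛdvd
  obtain ⟨d', hd'⟩ := hdvdΛ
  have h1 : lam' * (d' * d) = lam' * 1 := by
    rw [mul_one, ← mul_assoc, ← hd', ← hd]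
  have hdd : d' * d = 1 := mul_left_cancel₀ hlam'ne h1
  have hdunit : IsUnit d := ⟨⟨d, d', by rw [mul_comm]; exact hdd, hdd⟩, rfl⟩
  obtain ⟨u, hu, hCu⟩ := Polynomial.isUnit_iff.mp hdunit
  have hu1 : u = 1 := by
    have := hl0
    rw [hd, ← hCu, coeff_mul_C, hΛ0, one_mul] at this
    exact this
  have hlamΛ : lam' = Λ := by rw [hd, ← hCu, hu1, C_1, mul_one]
  refine ⟨hlamΛ, ?_⟩
  have : Λ * Ω = Λ * om' := by rw [← hcross, hlamΛ]
  exact (mul_left_cancel₀ hΛne this).symm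
end Key

/-- Decoding: if `e` is an error word of degree `≤ t/2` with `r − e ∈ C(ρ,t)`, and
`(λ, ω)` solves the key equation for the syndrome polynomial `S`, then the orbits `l`
whose minimal polynomial `p_l` divides `λ` are exactly those with `e_l ≠ 0`, and
`ω/λ = ∑_{l : e_l ≠ 0} e_l ∑_{j∈l} ρ(β^j)/(1 − β^j x)` in `E(x)`. -/
theorem decode_locator_and_fraction (q m : ℕ) (hm : 0 < m) (hqm : Nat.Coprime q m)
    (F E : Type*) [Field F] [Field E] [Fintype F] [Fintype E] [Algebra F E]
    (hF : Fintype.card F = q) (hE : Fintype.card E = q ^ m)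
    (β : E) (hβ : orderOf β = q ^ m - 1) (ρ : Polynomial F) (t : ℕ) (ht : 0 < t)
    (hρ : ∀ j : ZMod (q ^ m - 1), Polynomial.aeval (bpow β j) ρ ≠ 0)
    (r : ↥(orbitSet (q ^ m - 1) q) → F)
    (S : Polynomial F) (hSdeg : S.degree < t)
    (hS : ∀ i < t, algebraMap F E (S.coeff i) =
      ∑ᶠ l : orbitSet (q ^ m - 1) q,
        algebraMap F E (r l) * hEntry β ρ i (l : Set (ZMod (q ^ m - 1))))
    (e : ↥(orbitSet (q ^ m - 1) q) → F) (he : 2 * wdeg e ≤ t)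
    (hre : r - e ∈ codeSet F E (q ^ m - 1) q β ρ t)
    (lam om : Polynomial F) (hlam0 : lam.coeff 0 = 1) (hcop : IsCoprime lam om)
    (homdeg : om.degree < lam.degree) (hlamt : 2 * lam.natDegree ≤ t)
    (hkey : (X : Polynomial F) ^ t ∣ lam * S - om) :
    {l : ↥(orbitSet (q ^ m - 1) q) |
        ∀ j ∈ (l : Set (ZMod (q ^ m - 1))), minpoly F (bpow β j)⁻¹ ∣ lam} =
      {l : ↥(orbitSet (q ^ m - 1) q) | e l ≠ 0} ∧
    algebraMap (Polynomial E) (RatFunc E) (om.map (algebraMap F E)) /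
        algebraMap (Polynomial E) (RatFunc E) (lam.map (algebraMap F E)) =
      ∑ᶠ l ∈ {l : ↥(orbitSet (q ^ m - 1) q) | e l ≠ 0},
        RatFunc.C (algebraMap F E (e l)) *
          ∑ᶠ j ∈ (l : Set (ZMod (q ^ m - 1))),
            algebraMap (Polynomial E) (RatFunc E)
                (Polynomial.C (Polynomial.aeval (bpow β j) ρ)) /
              algebraMap (Polynomial E) (RatFunc E)
                (1 - Polynomial.C (bpow β j) * Polynomial.X) := by
  classical
  -- basic numerology
  have hq2 : 1 < q := by rw [← hF]; exact Fintype.one_lt_card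
  have hqm2 : 2 ≤ q ^ m := by
    calc 2 ≤ q := hq2
      _ = q ^ 1 := (pow_one q).symm
      _ ≤ q ^ m := Nat.pow_le_pow_right (by omega) hm
  have hNpos : 0 < q ^ m - 1 := by omega
  haveI : NeZero (q ^ m - 1) := ⟨by omega⟩
  have hqm1 : q ^ m = (q ^ m - 1) + 1 := by omega
  have hq1 : (q : ZMod (q ^ m - 1)) ^ m = 1 := by
    rw [← Nat.cast_pow, hqm1]
    push_cast
    simp [ZMod.natCast_self]
  -- facts about β
  have hβN : β ^ (q ^ m - 1) = 1 := by rw [← hβ]; exact pow_orderOf_eq_one β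
  have hβ0 : β ≠ 0 := by
    intro h
    rw [h, zero_pow hNpos.ne'] at hβN
    exact zero_ne_one hβN
  have hbne : ∀ j : ZMod (q ^ m - 1), bpow β j ≠ 0 := fun j => pow_ne_zero _ hβ0
  have hbinj : Function.Injective (bpow β (N := q ^ m - 1)) := by
    intro x y h
    apply ZMod.val_injective (q ^ m - 1)
    have hx : x.val ∈ Set.Iio (orderOf β) := by rw [hβ]; exact ZMod.val_lt x
    have hy : y.val ∈ Set.Iio (orderOf β) := by rw [hβ]; exact ZMod.val_lt y
    exact pow_injOn_Iio_orderOf hx hy h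
  have φinj : Function.Injective (algebraMap F E) := (algebraMap F E).injective
  -- the error vector as a function on ZMod (q ^ m - 1)
  set ce : ZMod (q ^ m - 1) → F := fun j => e (orbOf (q ^ m - 1) q j) with hce
  have hceq : ∀ (l : ↥(orbitSet (q ^ m - 1) q)) (j : ZMod (q ^ m - 1)), j ∈ (l : Set (ZMod (q ^ m - 1))) → ce j = e l := by
    intro l j hj
    rw [hce]
    simp only
    rw [(mem_orbit_iff' hm hq1 l j).mp hj]
  set J : Finset (ZMod (q ^ m - 1)) := Finset.univ.filter (fun j => ce j ≠ 0) with hJdef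
  have hEntry_eq : ∀ (i : ℕ) (l : ↥(orbitSet (q ^ m - 1) q)), hEntry β ρ i (l : Set (ZMod (q ^ m - 1)))
      = ∑ j ∈ (Set.toFinite (l : Set (ZMod (q ^ m - 1)))).toFinset,
          Polynomial.aeval (bpow β j) ρ * bpow β j ^ i := by
    intro i l
    exact finsum_mem_eq_finite_toFinset_sum _ _
  -- syndrome identity in terms of J
  have hsyn : ∀ i < t, (S.map (algebraMap F E)).coeff i
      = ∑ j ∈ J, (algebraMap F E (ce j) * Polynomial.aeval (bpow β j) ρ) * bpow β j ^ i := by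
    intro i hi
    rw [coeff_map, hS i hi]
    have hcode := hre i hi
    rw [finsum_eq_sum_of_fintype] at hcode
    rw [finsum_eq_sum_of_fintype]
    have hsub : ∑ l : ↥(orbitSet (q ^ m - 1) q), algebraMap F E (r l) * hEntry β ρ i (l : Set (ZMod (q ^ m - 1)))
        = ∑ l : ↥(orbitSet (q ^ m - 1) q), algebraMap F E (e l) * hEntry β ρ i (l : Set (ZMod (q ^ m - 1))) := by
      have h1 : ∀ l : ↥(orbitSet (q ^ m - 1) q),
          algebraMap F E ((r - e) l) * hEntry β ρ i (l : Set (ZMod (q ^ m - 1)))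
          = algebraMap F E (r l) * hEntry β ρ i (l : Set (ZMod (q ^ m - 1)))
            - algebraMap F E (e l) * hEntry β ρ i (l : Set (ZMod (q ^ m - 1))) := by
        intro l
        rw [Pi.sub_apply, map_sub, sub_mul]
      rw [Finset.sum_congr rfl (fun l _ => h1 l), Finset.sum_sub_distrib] at hcode
      exact sub_eq_zero.mp hcode
    rw [hsub]
    have h2 : ∀ l : ↥(orbitSet (q ^ m - 1) q),
        algebraMap F E (e l) * hEntry β ρ i (l : Set (ZMod (q ^ m - 1)))
        = ∑ j ∈ (Set.toFinite (l : Set (ZMod (q ^ m - 1)))).toFinset,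
            (algebraMap F E (ce j) * Polynomial.aeval (bpow β j) ρ) * bpow β j ^ i := by
      intro l
      rw [hEntry_eq i l, Finset.mul_sum]
      refine Finset.sum_congr rfl fun j hj => ?_
      rw [hceq l j ((Set.toFinite _).mem_toFinset.mp hj)]
      ring
    rw [Finset.sum_congr rfl (fun l _ => h2 l), sum_orbit hm hq1]
    rw [hJdef]
    rw [Finset.sum_filter_of_ne]
    intro j _ hne h0
    apply hne
    rw [h0, map_zero, zero_mul, zero_mul]
  -- weight = card J
  have hwdeg : wdeg e = J.card := by
    rw [wdeg, finsum_eq_sum_of_fintype]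
    have hthis : ∀ l : ↥(orbitSet (q ^ m - 1) q),
        (if e l ≠ 0 then (l : Set (ZMod (q ^ m - 1))).ncard else 0)
        = ∑ j ∈ (Set.toFinite (l : Set (ZMod (q ^ m - 1)))).toFinset,
            (if ce j ≠ 0 then (1 : ℕ) else 0) := by
      intro l
      have h1 : ∀ j ∈ (Set.toFinite (l : Set (ZMod (q ^ m - 1)))).toFinset,
          (if ce j ≠ 0 then (1:ℕ) else 0) = (if e l ≠ 0 then 1 else 0) := by
        intro j hj
        rw [hceq l j ((Set.toFinite _).mem_toFinset.mp hj)]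
      rw [Finset.sum_congr rfl h1, Finset.sum_const, smul_eq_mul]
      by_cases h : e l ≠ 0
      · rw [if_pos h, if_pos h, mul_one, Set.ncard_eq_toFinset_card _ (Set.toFinite _)]
      · rw [if_neg h, if_neg h, mul_zero]
    rw [Finset.sum_congr rfl (fun l _ => hthis l), sum_orbit hm hq1]
    rw [Finset.sum_boole]
    simp [hJdef]
  have hJt : 2 * J.card ≤ t := hwdeg ▸ he
  -- apply the uniqueness lemma
  have hkey' : (X : E[X]) ^ t ∣ (lam.map (algebraMap F E)) * (S.map (algebraMap F E))
      - om.map (algebraMap F E) := by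
    obtain ⟨d, hd⟩ := hkey
    refine ⟨d.map (algebraMap F E), ?_⟩
    have := congrArg (Polynomial.map (algebraMap F E)) hd
    simpa [Polynomial.map_mul, Polynomial.map_sub, Polynomial.map_pow] using this
  obtain ⟨hlamΛ, homΩ⟩ := key_unique J (bpow β) (fun j _ => hbne j) hbinj.injOn
      (fun j => algebraMap F E (ce j) * Polynomial.aeval (bpow β j) ρ)
      (fun j hj => mul_ne_zero
        (fun h0 => (Finset.mem_filter.mp hj).2 (φinj (by rw [h0, map_zero])))
        (hρ j)) t
      (S.map (algebraMap F E))
      (by rw [degree_map_eq_of_injective φinj]; exact hSdeg)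
      hsyn hJt (lam.map (algebraMap F E)) (om.map (algebraMap F E))
      (by rw [coeff_map, hlam0, map_one])
      (hcop.map (Polynomial.mapRingHom (algebraMap F E)))
      (by rw [degree_map_eq_of_injective φinj, degree_map_eq_of_injective φinj]; exact homdeg)
      (by rw [natDegree_map_eq_of_injective φinj]; exact hlamt)
      hkey'
  -- evaluation facts
  have hΛeval : ∀ j : ZMod (q ^ m - 1),
      ((lam.map (algebraMap F E)).eval (bpow β j)⁻¹ = 0 ↔ j ∈ J) := by
    intro j
    rw [hlamΛ, eval_prod]
    constructor
    · intro h
      obtain ⟨j', hj', hz⟩ := Finset.prod_eq_zero_iff.mp h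
      rw [eval_sub, eval_one, eval_mul, eval_C, eval_X] at hz
      have hb : bpow β j' = bpow β j :=
        (mul_inv_eq_one₀ (hbne j)).mp (sub_eq_zero.mp hz).symm
      rwa [← hbinj hb]
    · intro hj
      exact Finset.prod_eq_zero hj (by simp [mul_inv_cancel₀ (hbne j)])
  have hmin : ∀ j : ZMod (q ^ m - 1), (minpoly F (bpow β j)⁻¹ ∣ lam ↔ j ∈ J) := by
    intro j
    rw [← hΛeval j, Polynomial.eval_map, ← Polynomial.aeval_def]
    constructor
    · rintro ⟨d, hd⟩
      rw [hd, map_mul, minpoly.aeval, zero_mul]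
    · exact minpoly.dvd F _
  have hmemJ : ∀ (l : ↥(orbitSet (q ^ m - 1) q)) (j : ZMod (q ^ m - 1)), j ∈ (l : Set (ZMod (q ^ m - 1))) →
      (j ∈ J ↔ e l ≠ 0) := by
    intro l j hj
    rw [hJdef, Finset.mem_filter]
    simp only [Finset.mem_univ, true_and]
    rw [hceq l j hj]
  constructor
  · -- set equality
    ext l
    simp only [Set.mem_setOf_eq]
    constructor
    · intro hall
      obtain ⟨j₀, hl⟩ := l.2
      have hj₀ : j₀ ∈ (l : Set (ZMod (q ^ m - 1))) := by
        have : (l : Set (ZMod (q ^ m - 1))) = qOrbit (q ^ m - 1) q j₀ := hl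
        rw [this]
        exact mem_qOrbit_self (q ^ m - 1) q j₀
      exact (hmemJ l j₀ hj₀).mp ((hmin j₀).mp (hall j₀ hj₀))
    · intro hel j hj
      exact (hmin j).mpr ((hmemJ l j hj).mpr hel)
  · -- fraction identity
    have hfin : ({l : ↥(orbitSet (q ^ m - 1) q) | e l ≠ 0} : Set _).Finite := Set.toFinite _
    have hfne : ∀ j : ZMod (q ^ m - 1), (1 : E[X]) - C (bpow β j) * X ≠ 0 := by
      intro j h0
      have h1 := congrArg (fun p : E[X] => p.coeff 0) h0
      simp at h1
    have hAne : ∀ j : ZMod (q ^ m - 1),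
        algebraMap (Polynomial E) (RatFunc E) (1 - C (bpow β j) * X) ≠ 0 := by
      intro j h
      exact hfne j (RatFunc.algebraMap_injective E (by rw [h, map_zero]))
    have hLHS : algebraMap (Polynomial E) (RatFunc E) (om.map (algebraMap F E)) /
          algebraMap (Polynomial E) (RatFunc E) (lam.map (algebraMap F E))
        = ∑ j ∈ J, RatFunc.C (algebraMap F E (ce j)) *
            (algebraMap (Polynomial E) (RatFunc E) (C (Polynomial.aeval (bpow β j) ρ)) /
             algebraMap (Polynomial E) (RatFunc E) (1 - C (bpow β j) * X)) := by
      rw [hlamΛ, homΩ, map_sum, Finset.sum_div]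
      refine Finset.sum_congr rfl fun j hj => ?_
      rw [map_mul, map_prod, map_prod, ← Finset.mul_prod_erase J
        (fun j' => algebraMap (Polynomial E) (RatFunc E) (1 - C (bpow β j') * X)) hj]
      have hP : (∏ j' ∈ J.erase j,
          algebraMap (Polynomial E) (RatFunc E) (1 - C (bpow β j') * X)) ≠ 0 :=
        Finset.prod_ne_zero_iff.mpr fun j' _ => hAne j'
      rw [mul_div_mul_right _ _ hP]
      rw [C_mul, map_mul, RatFunc.algebraMap_C (algebraMap F E (ce j)), mul_div_assoc]
    rw [finsum_mem_eq_finite_toFinset_sum _ hfin, hLHS]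
    have hInner : ∀ l : ↥(orbitSet (q ^ m - 1) q),
        (∑ᶠ j ∈ (l : Set (ZMod (q ^ m - 1))),
          algebraMap (Polynomial E) (RatFunc E) (C (Polynomial.aeval (bpow β j) ρ)) /
          algebraMap (Polynomial E) (RatFunc E) (1 - C (bpow β j) * X))
        = ∑ j ∈ (Set.toFinite (l : Set (ZMod (q ^ m - 1)))).toFinset,
            algebraMap (Polynomial E) (RatFunc E) (C (Polynomial.aeval (bpow β j) ρ)) /
            algebraMap (Polynomial E) (RatFunc E) (1 - C (bpow β j) * X) :=
      fun l => finsum_mem_eq_finite_toFinset_sum _ _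
    have step1 : ∑ l ∈ hfin.toFinset, RatFunc.C (algebraMap F E (e l)) *
          (∑ᶠ j ∈ (l : Set (ZMod (q ^ m - 1))),
            algebraMap (Polynomial E) (RatFunc E) (C (Polynomial.aeval (bpow β j) ρ)) /
            algebraMap (Polynomial E) (RatFunc E) (1 - C (bpow β j) * X))
        = ∑ l : ↥(orbitSet (q ^ m - 1) q), RatFunc.C (algebraMap F E (e l)) *
          (∑ᶠ j ∈ (l : Set (ZMod (q ^ m - 1))),
            algebraMap (Polynomial E) (RatFunc E) (C (Polynomial.aeval (bpow β j) ρ)) /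
            algebraMap (Polynomial E) (RatFunc E) (1 - C (bpow β j) * X)) := by
      apply Finset.sum_subset (Finset.subset_univ _)
      intro l _ hl
      have h0 : e l = 0 := by
        have := hfin.mem_toFinset.not.mp hl
        simpa using this
      rw [h0, map_zero, map_zero, zero_mul]
    have step2 : ∀ l : ↥(orbitSet (q ^ m - 1) q),
        RatFunc.C (algebraMap F E (e l)) *
          (∑ᶠ j ∈ (l : Set (ZMod (q ^ m - 1))),
            algebraMap (Polynomial E) (RatFunc E) (C (Polynomial.aeval (bpow β j) ρ)) /
            algebraMap (Polynomial E) (RatFunc E) (1 - C (bpow β j) * X))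
        = ∑ j ∈ (Set.toFinite (l : Set (ZMod (q ^ m - 1)))).toFinset,
            RatFunc.C (algebraMap F E (ce j)) *
            (algebraMap (Polynomial E) (RatFunc E) (C (Polynomial.aeval (bpow β j) ρ)) /
             algebraMap (Polynomial E) (RatFunc E) (1 - C (bpow β j) * X)) := by
      intro l
      rw [hInner l, Finset.mul_sum]
      refine Finset.sum_congr rfl fun j hj => ?_
      rw [hceq l j ((Set.toFinite _).mem_toFinset.mp hj)]
    rw [step1, Finset.sum_congr rfl (fun l _ => step2 l), sum_orbit hm hq1]
    rw [hJdef]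
    rw [Finset.sum_filter_of_ne]
    intro j _ hne h0
    apply hne
    rw [h0, map_zero, map_zero, zero_mul]
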